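/- For every N ≥ 1, there exists a choice of complex parameters a_{j,i}, b_{j,i} (with all coupling parameters c_{j,i} = d_{j,i} = 0) such that the system f_i(u,v) = a_{1,i}u_i(u_i²+v_i²) + a_{2,i}u_i + a_{3,i}v_i + a_{4,i} = 0, g_i(u,v) = b_{1,i}v_i(u_i²+v_i²) + b_{2,i}u_i + b_{3,i}v_i + b_{4,i} = 0 for i = 1,…,N has exactly 5^N solutions in ℂ^{2N}. -/
import Mathlib

open Complex

def Sfac : Set (ℂ × ℂ) :=
  {p | p.1 * (p.1 ^ 2 + p.2 ^ 2) + 2 * p.2 = 0 ∧ p.2 * (p.1 ^ 2 + p.2 ^ 2) + 2 * p.1 = 0}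

lemma Sfac_eq : Sfac =
    {((0:ℂ),(0:ℂ)), (I,I), (-I,-I), (1,-1), (-1,1)} := by
  ext ⟨u, v⟩
  simp only [Sfac, Set.mem_setOf_eq, Set.mem_insert_iff, Set.mem_singleton_iff, Prod.mk.injEq]
  constructor
  · rintro ⟨h1, h2⟩
    have key : (u - v) * (u + v) = 0 := by linear_combination (u * h2 - v * h1) / 2
    rcases mul_eq_zero.1 key with h | h
    · have hv : u = v := sub_eq_zero.mp h
      subst hv
      have h3 : u * (u - I) * (u + I) = 0 := by
        linear_combination h1 / 2 - u * Complex.I_sq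
      rcases mul_eq_zero.1 h3 with h4 | h4
      · rcases mul_eq_zero.1 h4 with h5 | h5
        · exact Or.inl ⟨h5, h5⟩
        · exact Or.inr (Or.inl ⟨sub_eq_zero.mp h5, sub_eq_zero.mp h5⟩)
      · have : u = -I := by linear_combination h4
        exact Or.inr (Or.inr (Or.inl ⟨this, this⟩))
    · have hv : v = -u := by linear_combination h
      subst hv
      have h3 : u * (u - 1) * (u + 1) = 0 := by linear_combination h1 / 2
      rcases mul_eq_zero.1 h3 with h4 | h4
      · rcases mul_eq_zero.1 h4 with h5 | h5
        · exact Or.inl ⟨h5, by rw [h5]; ring⟩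
        · exact Or.inr (Or.inr (Or.inr (Or.inl ⟨sub_eq_zero.mp h5, by
            rw [sub_eq_zero.mp h5]⟩)))
      · have : u = -1 := by linear_combination h4
        exact Or.inr (Or.inr (Or.inr (Or.inr ⟨this, by rw [this]; ring⟩)))
  · rintro (⟨hu, hv⟩ | ⟨hu, hv⟩ | ⟨hu, hv⟩ | ⟨hu, hv⟩ | ⟨hu, hv⟩) <;> subst hu <;> subst hv <;>
      constructor <;>
      first
        | ring1
        | linear_combination 2 * I * Complex.I_sq
        | linear_combination (-2 * I) * Complex.I_sq

lemma Sfac_ncard : Sfac.ncard = 5 := by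
  have hI0 : (I : ℂ) ≠ 0 := I_ne_zero
  rw [Sfac_eq]
  rw [Set.ncard_insert_of_notMem, Set.ncard_insert_of_notMem,
      Set.ncard_insert_of_notMem, Set.ncard_insert_of_notMem, Set.ncard_singleton]
  all_goals (simp [Prod.ext_iff, Complex.ext_iff]; try norm_num)

/-- For every `N ≥ 1` there are complex parameters `a_{j,i}, b_{j,i}` (with all coupling
parameters zero) such that the decoupled system
`a_{1,i} u_i(u_i²+v_i²) + a_{2,i} u_i + a_{3,i} v_i + a_{4,i} = 0`,
`b_{1,i} v_i(u_i²+v_i²) + b_{2,i} u_i + b_{3,i} v_i + b_{4,i} = 0`, `i = 1,…,N`,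
has exactly `5^N` solutions in `ℂ^{2N}`. -/
theorem decoupled_system_five_pow_N_solutions (N : ℕ) (hN : 1 ≤ N) :
    ∃ a b : Fin N → Fin 4 → ℂ,
      ({w : (Fin N → ℂ) × (Fin N → ℂ) | ∀ i : Fin N,
          a i 0 * w.1 i * ((w.1 i) ^ 2 + (w.2 i) ^ 2) + a i 1 * w.1 i + a i 2 * w.2 i
              + a i 3 = 0 ∧
          b i 0 * w.2 i * ((w.1 i) ^ 2 + (w.2 i) ^ 2) + b i 1 * w.1 i + b i 2 * w.2 i
              + b i 3 = 0}).ncard = 5 ^ N := by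
  refine ⟨fun _ => ![1, 0, 2, 0], fun _ => ![1, 2, 0, 0], ?_⟩
  have hset : {w : (Fin N → ℂ) × (Fin N → ℂ) | ∀ i : Fin N,
          (![1, 0, 2, 0] : Fin 4 → ℂ) 0 * w.1 i * ((w.1 i) ^ 2 + (w.2 i) ^ 2)
            + (![1, 0, 2, 0] : Fin 4 → ℂ) 1 * w.1 i + (![1, 0, 2, 0] : Fin 4 → ℂ) 2 * w.2 i
            + (![1, 0, 2, 0] : Fin 4 → ℂ) 3 = 0 ∧
          (![1, 2, 0, 0] : Fin 4 → ℂ) 0 * w.2 i * ((w.1 i) ^ 2 + (w.2 i) ^ 2)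
            + (![1, 2, 0, 0] : Fin 4 → ℂ) 1 * w.1 i + (![1, 2, 0, 0] : Fin 4 → ℂ) 2 * w.2 i
            + (![1, 2, 0, 0] : Fin 4 → ℂ) 3 = 0}
      = {w : (Fin N → ℂ) × (Fin N → ℂ) | ∀ i : Fin N, (w.1 i, w.2 i) ∈ Sfac} := by
    ext w
    simp only [Set.mem_setOf_eq, Sfac, Matrix.cons_val_zero, Matrix.cons_val_one,
      Matrix.head_cons, Matrix.cons_val_two, Matrix.tail_cons, Matrix.cons_val_three,
      Matrix.head_fin_const]
    refine forall_congr' fun i => and_congr ?_ ?_ <;> constructor <;> intro h <;>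
      linear_combination h
  rw [hset]
  have e : {w : (Fin N → ℂ) × (Fin N → ℂ) | ∀ i : Fin N, (w.1 i, w.2 i) ∈ Sfac}
      ≃ (Fin N → Sfac) :=
    { toFun := fun w i => ⟨(w.1.1 i, w.1.2 i), w.2 i⟩
      invFun := fun f => ⟨(fun i => (f i).1.1, fun i => (f i).1.2), fun i => (f i).2⟩
      left_inv := fun w => rfl
      right_inv := fun f => rfl }
  rw [← Nat.card_coe_set_eq, Nat.card_congr e, Nat.card_pi]
  simp [Nat.card_coe_set_eq, Sfac_ncard]
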